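/- For any valuation v and any n, the AnyPrice share (price-based definition) is at least the maximin share: APS ≥ MMS. -/

import Mathlib

open Finset

/-- `v` is an XOS valuation: pointwise maximum of a nonempty family of
additive (nonnegative) functions. -/
def IsXOS (m : ℕ) (v : Finset (Fin m) → ℝ) : Prop :=
  ∃ F : Set (Fin m → ℝ), F.Nonempty ∧ (∀ f ∈ F, ∀ g, 0 ≤ f g) ∧
    (∀ S : Finset (Fin m), ∃ f ∈ F, v S = ∑ g ∈ S, f g) ∧
    (∀ f ∈ F, ∀ S : Finset (Fin m), ∑ g ∈ S, f g ≤ v S)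

/-- `v` has binary marginals: adding any good changes the value by 0 or 1. -/
def BinaryMarginals (m : ℕ) (v : Finset (Fin m) → ℝ) : Prop :=
  ∀ S : Finset (Fin m), ∀ g : Fin m,
    v (insert g S) - v S = 0 ∨ v (insert g S) - v S = 1

/-- `A` is a partition of the goods `[m]` into `n` (possibly empty) bundles. -/
def IsPartition (m n : ℕ) (A : Fin n → Finset (Fin m)) : Prop :=
  (∀ i j : Fin n, i ≠ j → Disjoint (A i) (A j)) ∧
    Finset.univ.biUnion A = (Finset.univ : Finset (Fin m))

/-- `μ` is the maximin share of `v` over `n` agents: the maximum over all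
partitions into `n` bundles of the minimum bundle value. -/
def IsMMS (m n : ℕ) (v : Finset (Fin m) → ℝ) (μ : ℝ) : Prop :=
  (∃ A : Fin n → Finset (Fin m), IsPartition m n A ∧ ∀ j, μ ≤ v (A j)) ∧
  (∀ A : Fin n → Finset (Fin m), IsPartition m n A → ∃ j, v (A j) ≤ μ)

/-- `a` is the AnyPrice share (price-based): the minimum over nonnegative
price vectors of total price 1 of the maximum value of a bundle of price
at most `1/n`. -/
def IsAPS (m n : ℕ) (v : Finset (Fin m) → ℝ) (a : ℝ) : Prop :=
  (∃ p : Fin m → ℝ, (∀ g, 0 ≤ p g) ∧ (∑ g, p g = 1) ∧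
    ∀ S : Finset (Fin m), (∑ g ∈ S, p g) ≤ 1 / n → v S ≤ a) ∧
  (∀ p : Fin m → ℝ, (∀ g, 0 ≤ p g) → (∑ g, p g = 1) →
    ∃ S : Finset (Fin m), (∑ g ∈ S, p g) ≤ 1 / n ∧ a ≤ v S)

theorem aps_ge_mms {m n : ℕ} (v : Finset (Fin m) → ℝ)
    (hmono : ∀ A B : Finset (Fin m), A ⊆ B → v A ≤ v B)
    (h0 : v ∅ = 0)
    (μ a : ℝ) (hmms : IsMMS m n v μ) (haps : IsAPS m n v a) :
    μ ≤ a := by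
  obtain ⟨⟨A, ⟨hdisj, hcover⟩, hA⟩, _⟩ := hmms
  obtain ⟨⟨p, hp0, hp1, hbound⟩, _⟩ := haps
  rcases Nat.eq_zero_or_pos n with hn | hn
  · subst hn
    have he : (Finset.univ : Finset (Fin m)) = ∅ := by
      rw [← hcover]; simp
    have : (0:ℝ) = 1 := by rw [← hp1, he, Finset.sum_empty]
    exact absurd this (by norm_num)
  -- pigeonhole: some bundle has price ≤ 1/n
  have hsum : ∑ j : Fin n, ∑ g ∈ A j, p g = 1 := by
    rw [← Finset.sum_biUnion]
    · rw [hcover, hp1]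
    · intro i _ j _ hij; exact hdisj i j hij
  by_contra hlt
  push_neg at hlt
  have hall : ∀ j : Fin n, 1 / n < ∑ g ∈ A j, p g := by
    intro j
    by_contra h
    push_neg at h
    exact absurd (le_trans (hA j) (hbound _ h)) (not_le.mpr hlt)
  have : (1:ℝ) < 1 := by
    calc (1:ℝ) = ∑ _j : Fin n, 1 / (n:ℝ) := by
          rw [Finset.sum_const, Finset.card_univ, Fintype.card_fin]
          rw [nsmul_eq_mul, mul_one_div_cancel (Nat.cast_ne_zero.mpr hn.ne')]
      _ < ∑ j : Fin n, ∑ g ∈ A j, p g := by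
          apply Finset.sum_lt_sum_of_nonempty
          · haveI : NeZero n := ⟨hn.ne'⟩; exact Finset.univ_nonempty
          · intro j _; exact hall j
      _ = 1 := hsum
  exact absurd this (by norm_num)
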